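/- For non-negative integers n > t, the (2t+1)-st power of the odd cycle C_{2n+1} is isomorphic to the circular complete graph K_{(2n+1)/(n−t)}. -/

import Mathlib

structure PGraph where
  V : Type
  Adj : V → V → Prop
  symm : ∀ u v, Adj u v → Adj v u

namespace PGraph

/-- There is a walk of length exactly `n` from `u` to `v`. -/
def walkLen (G : PGraph) : ℕ → G.V → G.V → Prop
  | 0, u, v => u = v
  | n+1, u, v => ∃ w, G.Adj u w ∧ G.walkLen n w v

theorem walkLen_concat (G : PGraph) : ∀ (n : ℕ) (u v w : G.V),
    G.walkLen n u v → G.Adj v w → G.walkLen (n+1) u w := by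
  intro n
  induction n with
  | zero =>
      intro u v w h hadj
      cases h
      exact ⟨w, hadj, rfl⟩
  | succ n ih =>
      rintro u v w ⟨x, hux, hxv⟩ hadj
      exact ⟨x, hux, ih x v w hxv hadj⟩

theorem walkLen_symm (G : PGraph) : ∀ (n : ℕ) (u v : G.V),
    G.walkLen n u v → G.walkLen n v u := by
  intro n
  induction n with
  | zero => intro u v h; exact h.symm
  | succ n ih =>
      rintro u v ⟨w, huw, hwv⟩
      exact G.walkLen_concat n v w u (ih w v hwv) (G.symm u w huw)

/-- The `k`-th power of a graph: same vertices, adjacency = existence of a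
walk of length exactly `k` (loops allowed). -/
def pow (G : PGraph) (k : ℕ) : PGraph where
  V := G.V
  Adj u v := G.walkLen k u v
  symm := G.walkLen_symm k

/-- Existence of a graph homomorphism. -/
def homTo (G H : PGraph) : Prop :=
  ∃ f : G.V → H.V, ∀ u v, G.Adj u v → H.Adj (f u) (f v)

/-- The `(2s+1)`-subdivision `S_{2s+1}(G)`: every edge is replaced by a path
of length `2s+1`.  Following the paper's notation, the ordered pair `(u,v)`
(with `u ~ v`) carries the `s` inner vertices `(uv)_1, …, (uv)_s`. -/
def subdiv (G : PGraph) (s : ℕ) : PGraph where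
  V := G.V ⊕ ({p : G.V × G.V // G.Adj p.1 p.2} × Fin s)
  Adj x y :=
    match x, y with
    | Sum.inl u, Sum.inl v => s = 0 ∧ G.Adj u v
    | Sum.inl u, Sum.inr (e, k) => u = e.1.2 ∧ (k : ℕ) = s - 1
    | Sum.inr (e, k), Sum.inl u => u = e.1.2 ∧ (k : ℕ) = s - 1
    | Sum.inr (e, k), Sum.inr (e', l) =>
        e'.1.1 = e.1.2 ∧ e'.1.2 = e.1.1 ∧
        ((k : ℕ) + (l : ℕ) + 2 = s ∨ (k : ℕ) + (l : ℕ) + 2 = s + 1)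
  symm := by
    rintro (u | ⟨e, k⟩) (v | ⟨e', l⟩) h
    · exact ⟨h.1, G.symm _ _ h.2⟩
    · exact h
    · exact h
    · obtain ⟨h1, h2, h3⟩ := h
      exact ⟨h2.symm, h1.symm, by omega⟩

/-- `q < og(G)`: the rational `q` is smaller than the odd girth of `G`
(the length of a shortest odd closed walk; vacuously true if `G` is bipartite). -/
def ltOddGirth (G : PGraph) (q : ℚ) : Prop :=
  ∀ n : ℕ, Odd n → (∃ v, G.walkLen n v v) → q < (n : ℚ)

/-- A graph is non-bipartite iff it contains an odd closed walk. -/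
def Nonbipartite (G : PGraph) : Prop :=
  ∃ (n : ℕ) (v : G.V), Odd n ∧ G.walkLen n v v

/-- The odd girth, as an extended natural number (`⊤` for bipartite graphs). -/
noncomputable def oddGirth (G : PGraph) : ℕ∞ :=
  sInf {N : ℕ∞ | ∃ n : ℕ, N = (n : ℕ∞) ∧ Odd n ∧ ∃ v, G.walkLen n v v}

/-- The complete graph on `m` vertices. -/
def completeGraph (m : ℕ) : PGraph :=
  ⟨Fin m, fun u v => u ≠ v, fun _ _ h => h.symm⟩

/-- The chromatic number: least `m` such that `G` maps homomorphically to `K_m`. -/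
noncomputable def chromatic (G : PGraph) : ℕ :=
  sInf {m : ℕ | G.homTo (completeGraph m)}

/-- The `i`-th power thickness
`θ_i(G) = sup { (2r+1)/(2s+1) | χ(G^{(2r+1)/(2s+1)}) ≤ χ(G)+i, (2r+1)/(2s+1) < og(G) }`. -/
noncomputable def powerThickness (G : PGraph) (i : ℤ) : ℝ :=
  sSup {x : ℝ | ∃ r s : ℕ, x = (2*(r:ℝ)+1)/(2*(s:ℝ)+1) ∧
    ((((G.subdiv s).pow (2*r+1)).chromatic : ℤ) ≤ (G.chromatic : ℤ) + i) ∧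
    G.ltOddGirth ((2*(r:ℚ)+1)/(2*(s:ℚ)+1))}

/-- The graph `H^{-1/(2r+1)}`. -/
def negPow (H : PGraph) (r : ℕ) : PGraph where
  V := {A : Fin (r+1) → Set H.V //
        (∃ v, A 0 = {v}) ∧
        ∀ i : Fin (r+1), (A i).Nonempty ∧ A i ⊆ {u | ∃ v ∈ A 0, H.walkLen i v u}}
  Adj A B :=
    (∀ i j : Fin (r+1), (j : ℕ) = (i : ℕ) + 1 → A.1 i ⊆ B.1 j ∧ B.1 i ⊆ A.1 j) ∧
    ∀ j : Fin (r+1), ∀ a ∈ A.1 j, ∀ b ∈ B.1 j, H.Adj a b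
  symm := by
    rintro A B ⟨h1, h2⟩
    exact ⟨fun i j hij => ⟨(h1 i j hij).2, (h1 i j hij).1⟩,
           fun j b hb a ha => H.symm _ _ (h2 j a ha b hb)⟩

/-- The circular complete graph `K_{n/d}`. -/
def circGraph (n d : ℕ) : PGraph where
  V := Fin n
  Adj u v := (d : ℤ) ≤ |(u : ℤ) - (v : ℤ)| ∧ |(u : ℤ) - (v : ℤ)| ≤ (n : ℤ) - d
  symm := by
    intro u v h
    rwa [abs_sub_comm]

/-- The circular chromatic number, as a real number. -/
noncomputable def circChrom (G : PGraph) : ℝ :=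
  sInf {x : ℝ | ∃ n d : ℕ, 0 < d ∧ 2 * d ≤ n ∧ Nat.gcd n d = 1 ∧
    x = (n : ℝ) / (d : ℝ) ∧ G.homTo (circGraph n d)}

/-- The cycle on `m` vertices. -/
def cycleGraph (m : ℕ) : PGraph :=
  ⟨ZMod m, fun i j => i = j + 1 ∨ j = i + 1, fun _ _ h => h.symm⟩

/-- Graph isomorphism. -/
def Isom (G H : PGraph) : Prop :=
  ∃ f : G.V ≃ H.V, ∀ u v, G.Adj u v ↔ H.Adj (f u) (f v)

/-- The helical graph `H(m,n,k)`. -/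
def helical (m n k : ℕ) : PGraph where
  V := {A : Fin k → Set (Fin m) //
        (∀ h : 0 < k, (A ⟨0, h⟩).ncard = n) ∧
        (∀ i, n ≤ (A i).ncard) ∧
        (∀ i : Fin k, ∀ h : (i : ℕ) + 1 < k, A i ∩ A ⟨(i : ℕ) + 1, h⟩ = ∅) ∧
        (∀ i : Fin k, ∀ h : (i : ℕ) + 2 < k, A i ⊆ A ⟨(i : ℕ) + 2, h⟩)}
  Adj A B :=
    (∀ i, A.1 i ∩ B.1 i = ∅) ∧
    (∀ i : Fin k, ∀ h : (i : ℕ) + 1 < k,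
      A.1 i ⊆ B.1 ⟨(i : ℕ) + 1, h⟩ ∧ B.1 i ⊆ A.1 ⟨(i : ℕ) + 1, h⟩)
  symm := by
    rintro A B ⟨h1, h2⟩
    refine ⟨fun i => ?_, fun i h => ⟨(h2 i h).2, (h2 i h).1⟩⟩
    rw [Set.inter_comm]
    exact h1 i

/-- A graph with chromatic number `k` is colorful if every proper `k`-coloring
admits a (nonempty) induced subgraph all of whose vertices see all `k` colors in
their closed neighborhood. -/
def Colorful (G : PGraph) : Prop :=
  ∀ c : G.V → Fin G.chromatic, (∀ u v, G.Adj u v → c u ≠ c v) →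
    ∃ S : Set G.V, S.Nonempty ∧
      ∀ v ∈ S, ∀ col : Fin G.chromatic,
        ∃ u ∈ S, (u = v ∨ G.Adj v u) ∧ c u = col

end PGraph

open PGraph

lemma cycle_walk_iff (N : ℕ) (L : ℕ) (u v : ZMod N) :
    (cycleGraph N).walkLen L u v ↔
      ∃ a b : ℕ, a + b = L ∧ v = u + (((a : ℤ) - (b : ℤ)) : ZMod N) := by
  induction L generalizing u with
  | zero =>
    constructor
    · intro hh; exact ⟨0, 0, rfl, by have hh' : v = u := hh.symm; simpa using hh'⟩
    · rintro ⟨a, b, hab, hv⟩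
      have ha : a = 0 := by omega
      have hb : b = 0 := by omega
      subst ha hb
      exact (by simpa using hv.symm : u = v)
  | succ L ih =>
    constructor
    · rintro ⟨w, hadj, hw⟩
      obtain ⟨a, b, hab, hv⟩ := (ih w).mp hw
      rcases hadj with h1 | h1
      · refine ⟨a, b + 1, by omega, ?_⟩
        have hww : u - 1 = w := by rw [h1]; exact @add_sub_cancel_right (ZMod N) _ w 1
        rw [hv, ← hww]; push_cast; ring
      · refine ⟨a + 1, b, by omega, ?_⟩
        have hww : u + 1 = w := h1.symm
        rw [hv, ← hww]; push_cast; ring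
    · rintro ⟨a, b, hab, hv⟩
      rcases Nat.eq_zero_or_pos a with ha | ha
      · have hb : 1 ≤ b := by omega
        refine ⟨u - 1, Or.inl (sub_add_cancel u 1).symm, (ih (u - 1)).mpr ⟨a, b - 1, by omega, ?_⟩⟩
        rw [hv]
        have hcast : ((b - 1 : ℕ) : ℤ) = (b : ℤ) - 1 := by omega
        rw [hcast]; push_cast; ring
      · refine ⟨u + 1, Or.inr rfl, (ih (u + 1)).mpr ⟨a - 1, b, by omega, ?_⟩⟩
        rw [hv]
        have hcast : ((a - 1 : ℕ) : ℤ) = (a : ℤ) - 1 := by omega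
        rw [hcast]; push_cast; ring

lemma valcast (n : ℕ) [NeZero n] (a : ZMod n) : ((a.val : ℕ) : ZMod n) = a := by
  rw [ZMod.natCast_val, ZMod.cast_id]

/-- For `n > t`, `C_{2n+1}^{2t+1} ≅ K_{(2n+1)/(n-t)}`. -/
theorem cycle_pow_isom_circ (n t : ℕ) (h : t < n) :
    Isom ((cycleGraph (2 * n + 1)).pow (2 * t + 1)) (circGraph (2 * n + 1) (n - t)) := by
  have hN : (2 * n + 1) ≠ 0 := by omega
  haveI : NeZero (2 * n + 1) := ⟨hN⟩
  set N : ℕ := 2 * n + 1 with hNdef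
  set g : ZMod N → Fin N := fun x => ⟨(((n + 1 : ℕ) : ZMod N) * x).val, ZMod.val_lt _⟩ with hg
  have key2 : (2 * ((n + 1 : ℕ) : ZMod N)) = 1 := by
    have h22 : ((2 * n + 2 : ℕ) : ZMod N) = ((N : ℕ) : ZMod N) + 1 := by
      rw [hNdef]; push_cast; ring
    rw [ZMod.natCast_self] at h22
    calc (2 : ZMod N) * ((n + 1 : ℕ) : ZMod N) = ((2 * n + 2 : ℕ) : ZMod N) := by push_cast; ring
    _ = 1 := by rw [h22, zero_add]
  have hginj : Function.Injective g := by
    intro a b hab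
    have h1 : ((((n + 1 : ℕ) : ZMod N) * a).val) = ((((n + 1 : ℕ) : ZMod N) * b).val) :=
      congrArg Fin.val hab
    have h2 : ((n + 1 : ℕ) : ZMod N) * a = ((n + 1 : ℕ) : ZMod N) * b := by
      rw [← valcast N (((n + 1 : ℕ) : ZMod N) * a), h1, valcast]
    calc a = 2 * ((n + 1 : ℕ) : ZMod N) * a := by rw [key2, one_mul]
    _ = 2 * ((n + 1 : ℕ) : ZMod N) * b := by rw [mul_assoc, h2, mul_assoc]
    _ = b := by rw [key2, one_mul]
  have hgbij : Function.Bijective g := by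
    rw [Fintype.bijective_iff_injective_and_card]
    exact ⟨hginj, by simp [ZMod.card]⟩
  refine ⟨Equiv.ofBijective g hgbij, fun (u v : ZMod N) => ?_⟩
  show (cycleGraph N).walkLen (2 * t + 1) u v ↔ _
  rw [cycle_walk_iff]
  set δ : ZMod N := ((n + 1 : ℕ) : ZMod N) * (v - u) with hδ
  set d : ℕ := δ.val with hd
  have hdlt : d < N := ZMod.val_lt δ
  have mid : (∃ a b : ℕ, a + b = 2 * t + 1 ∧ v = u + (((a : ℤ) - (b : ℤ)) : ZMod N)) ↔
      (n - t ≤ d ∧ d ≤ n + t + 1) := by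
    constructor
    · rintro ⟨a, b, hab, hv⟩
      have hvu : v - u = (((a : ℤ) - (b : ℤ)) : ZMod N) := by rw [hv]; ring
      rcases Nat.lt_or_ge b a with hba | hba
      · obtain ⟨c, hc, hct⟩ : ∃ c, a = b + (2 * c + 1) ∧ c ≤ t :=
          ⟨(a - b - 1) / 2, by omega, by omega⟩
        have hδval : δ = ((n + 1 + c : ℕ) : ZMod N) := by
          rw [hδ, hvu]
          have e : ((n + 1 : ℕ) : ZMod N) * (((a : ℤ) - (b : ℤ)) : ZMod N)
              = ((n + 1 + c : ℕ) : ZMod N) + ((N : ℕ) : ZMod N) * ((c : ℕ) : ZMod N) := by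
            rw [hNdef, hc]; push_cast; ring
          rw [e, ZMod.natCast_self, zero_mul, add_zero]
        have : d = n + 1 + c := by
          rw [hd, hδval, ZMod.val_cast_of_lt (by omega)]
        omega
      · obtain ⟨c, hc, hct⟩ : ∃ c, b = a + (2 * c + 1) ∧ c ≤ t :=
          ⟨(b - a - 1) / 2, by omega, by omega⟩
        have hδval : δ = ((n - c : ℕ) : ZMod N) := by
          rw [hδ, hvu]
          have hnc : ((n - c : ℕ) : ℤ) = (n : ℤ) - c := by omega
          have e : ((n + 1 : ℕ) : ZMod N) * (((a : ℤ) - (b : ℤ)) : ZMod N)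
              = ((((n - c : ℕ) : ℤ)) : ZMod N)
                + ((N : ℕ) : ZMod N) * (((-(c : ℤ) - 1) : ℤ) : ZMod N) := by
            rw [hNdef, hc, hnc]; push_cast; ring
          rw [e, ZMod.natCast_self, zero_mul, add_zero]
          push_cast; ring
        have : d = n - c := by
          rw [hd, hδval, ZMod.val_cast_of_lt (by omega)]
        omega
    · rintro ⟨hlo, hhi⟩
      have hvu2 : v - u = 2 * δ := by
        rw [hδ, ← mul_assoc, key2, one_mul]
      have hδd : δ = ((d : ℕ) : ZMod N) := (valcast N δ).symm
      rcases Nat.lt_or_ge d (n + 1) with hdn | hdn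
      · set c : ℕ := n - d with hcdef
        refine ⟨t - c, t + 1 + c, by omega, ?_⟩
        have key : v - u = ((((t - c : ℕ) : ℤ) - ((t + 1 + c : ℕ) : ℤ)) : ZMod N) := by
          rw [hvu2, hδd]
          have e1 : ((t - c : ℕ) : ℤ) = (t : ℤ) - c := by omega
          have e2 : (2 * d : ℤ) = (((t : ℤ) - c - (t + 1 + c)) : ℤ) + (N : ℤ) := by
            simp only [hNdef]; push_cast; omega
          calc (2 : ZMod N) * ((d : ℕ) : ZMod N) = (((2 * d : ℤ)) : ZMod N) := by push_cast; ring
          _ = ((((t : ℤ) - c - (t + 1 + c)) : ℤ) : ZMod N) + ((N : ℕ) : ZMod N) := by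
              rw [e2]; push_cast; ring
          _ = _ := by rw [ZMod.natCast_self, add_zero, e1]; push_cast; ring
        rw [← key]; ring
      · set c : ℕ := d - (n + 1) with hcdef
        refine ⟨t + 1 + c, t - c, by omega, ?_⟩
        have key : v - u = ((((t + 1 + c : ℕ) : ℤ) - ((t - c : ℕ) : ℤ)) : ZMod N) := by
          rw [hvu2, hδd]
          have e1 : ((t - c : ℕ) : ℤ) = (t : ℤ) - c := by omega
          have e2 : (2 * d : ℤ) = (((t : ℤ) + 1 + c - ((t : ℤ) - c)) : ℤ) + (N : ℤ) := by
            simp only [hNdef]; push_cast; omega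
          calc (2 : ZMod N) * ((d : ℕ) : ZMod N) = (((2 * d : ℤ)) : ZMod N) := by push_cast; ring
          _ = ((((t : ℤ) + 1 + c - ((t : ℤ) - c)) : ℤ) : ZMod N) + ((N : ℕ) : ZMod N) := by
              rw [e2]; push_cast; ring
          _ = _ := by rw [ZMod.natCast_self, add_zero, e1]; push_cast; ring
        rw [← key]; ring
  rw [mid]
  set α : ℕ := (((n + 1 : ℕ) : ZMod N) * u).val with hα
  set β : ℕ := (((n + 1 : ℕ) : ZMod N) * v).val with hβ
  have hαlt : α < N := ZMod.val_lt _
  have hβlt : β < N := ZMod.val_lt _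
  have hC : (circGraph N (n - t)).Adj (Equiv.ofBijective g hgbij u) (Equiv.ofBijective g hgbij v)
      ↔ (((n - t : ℕ) : ℤ) ≤ |((α : ℕ) : ℤ) - ((β : ℕ) : ℤ)|
          ∧ |((α : ℕ) : ℤ) - ((β : ℕ) : ℤ)| ≤ ((N : ℕ) : ℤ) - ((n - t : ℕ) : ℤ)) := Iff.rfl
  refine Iff.trans ?_ hC.symm
  have hdvd : ((N : ℕ) : ℤ) ∣ (((β : ℕ) : ℤ) - ((α : ℕ) : ℤ) - ((d : ℕ) : ℤ)) := by
    rw [← ZMod.intCast_zmod_eq_zero_iff_dvd]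
    push_cast
    rw [hβ, hα, hd, valcast, valcast, valcast, hδ]
    ring
  obtain ⟨k, hk⟩ := hdvd
  have hNpos : (0 : ℤ) < ((N : ℕ) : ℤ) := by
    have := Nat.pos_of_ne_zero hN
    omega
  have hk1 : k < 1 := by
    have h1 : ((N : ℕ) : ℤ) * k < ((N : ℕ) : ℤ) * 1 := by rw [mul_one, ← hk]; omega
    exact lt_of_mul_lt_mul_left h1 (le_of_lt hNpos)
  have hk2 : -2 < k := by
    have h1 : ((N : ℕ) : ℤ) * (-2) < ((N : ℕ) : ℤ) * k := by rw [← hk]; omega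
    exact lt_of_mul_lt_mul_left h1 (le_of_lt hNpos)
  have hkor : k = 0 ∨ k = -1 := by omega
  rcases hkor with rfl | rfl <;>
    rcases abs_cases (((α : ℕ) : ℤ) - ((β : ℕ) : ℤ)) with ⟨he1, he2⟩ | ⟨he1, he2⟩ <;>
      rw [he1] <;> omega
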